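/- arXiv:1902.02592 — 3 statements merged into one kernel-verified Lean document; each statement's English description precedes it below -/
import Mathlib

section
/- Let G be a group and k ≥ 1 an integer. If φ and ψ are automorphisms of the quotient G/Γ_{2k+1}G (where Γ_j denotes the lower central series) that both induce the identity on G/Γ_{k+1}G, then φ and ψ commute. -/
open Subgroup
open scoped commutatorElement

private lemma aux_c1 {M : Type*} [Group M] (a b c : M) (h : ∀ x, Commute c x) :
    ⁅a * c, b⁆ = ⁅a, b⁆ := by
  rw [commutatorElement_def, commutatorElement_def, mul_assoc a c b, (h b).eq]
  group

private lemma aux_c2 {M : Type*} [Group M] (a b c : M) (h : Commute c a) :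
    ⁅a, b * c⁆ = ⁅a, b⁆ := by
  rw [commutatorElement_def, commutatorElement_def, ← mul_assoc a b c,
    mul_assoc (a * b) c a⁻¹, (h.inv_right).eq]
  group

private lemma lcs_comm_le (G : Type*) [Group G] :
    ∀ m n : ℕ, ⁅(⊤ : Subgroup G).lowerCentralSeries m, (⊤ : Subgroup G).lowerCentralSeries n⁆ ≤
      (⊤ : Subgroup G).lowerCentralSeries (m + n + 1) := by
  intro m
  induction m with
  | zero =>
    intro n
    rw [Subgroup.lowerCentralSeries_zero, Subgroup.commutator_comm]
    show ⁅(⊤ : Subgroup G).lowerCentralSeries n, ⊤⁆ ≤ (⊤ : Subgroup G).lowerCentralSeries (0 + n + 1)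
    rw [Nat.zero_add]
    exact le_of_eq rfl
  | succ m ih =>
    intro n
    set N := (⊤ : Subgroup G).lowerCentralSeries (m + 1 + n + 1) with hN
    let π := QuotientGroup.mk' N
    suffices h : Subgroup.map π ⁅(⊤ : Subgroup G).lowerCentralSeries (m + 1), (⊤ : Subgroup G).lowerCentralSeries n⁆ = ⊥ by
      rwa [Subgroup.map_eq_bot_iff, QuotientGroup.ker_mk'] at h
    have hLm1 : (⊤ : Subgroup G).lowerCentralSeries (m + 1) = ⁅(⊤ : Subgroup G).lowerCentralSeries m, ⊤⁆ := rfl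
    rw [hLm1, Subgroup.map_commutator, Subgroup.map_commutator]
    apply Subgroup.commutator_commutator_eq_bot_of_rotate
    · -- ⁅⁅map ⊤, map Ln⁆, map Lm⁆ = ⊥
      rw [← Subgroup.map_commutator, ← Subgroup.map_commutator,
        Subgroup.map_eq_bot_iff, QuotientGroup.ker_mk']
      calc ⁅⁅(⊤ : Subgroup G), (⊤ : Subgroup G).lowerCentralSeries n⁆, (⊤ : Subgroup G).lowerCentralSeries m⁆
          = ⁅⁅(⊤ : Subgroup G).lowerCentralSeries n, (⊤ : Subgroup G)⁆, (⊤ : Subgroup G).lowerCentralSeries m⁆ := by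
            rw [Subgroup.commutator_comm (⊤ : Subgroup G)]
        _ = ⁅(⊤ : Subgroup G).lowerCentralSeries (n + 1), (⊤ : Subgroup G).lowerCentralSeries m⁆ := rfl
        _ = ⁅(⊤ : Subgroup G).lowerCentralSeries m, (⊤ : Subgroup G).lowerCentralSeries (n + 1)⁆ :=
            Subgroup.commutator_comm _ _
        _ ≤ (⊤ : Subgroup G).lowerCentralSeries (m + (n + 1) + 1) := ih (n + 1)
        _ = N := by rw [hN]; ring_nf
    · -- ⁅⁅map Ln, map Lm⁆, map ⊤⁆ = ⊥
      rw [← Subgroup.map_commutator, ← Subgroup.map_commutator,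
        Subgroup.map_eq_bot_iff, QuotientGroup.ker_mk']
      calc ⁅⁅(⊤ : Subgroup G).lowerCentralSeries n, (⊤ : Subgroup G).lowerCentralSeries m⁆, (⊤ : Subgroup G)⁆
          ≤ ⁅(⊤ : Subgroup G).lowerCentralSeries (m + n + 1), (⊤ : Subgroup G)⁆ := by
            apply Subgroup.commutator_mono _ le_rfl
            rw [Subgroup.commutator_comm]; exact ih n
        _ = (⊤ : Subgroup G).lowerCentralSeries (m + n + 1 + 1) := rfl
        _ = N := by rw [hN]; ring_nf
  
private lemma lcs_le_map {G H : Type*} [Group G] [Group H] (f : G →* H)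
    (hf : Function.Surjective f) (n : ℕ) :
    (⊤ : Subgroup H).lowerCentralSeries n ≤ ((⊤ : Subgroup G).lowerCentralSeries n).map f := by
  induction n with
  | zero =>
    intro x _
    obtain ⟨g, rfl⟩ := hf x
    exact ⟨g, Subgroup.mem_top g, rfl⟩
  | succ n ih =>
    show ⁅(⊤ : Subgroup H).lowerCentralSeries n, ⊤⁆ ≤ _
    have : ((⊤ : Subgroup G).lowerCentralSeries (n + 1)).map f = ⁅((⊤ : Subgroup G).lowerCentralSeries n).map f,
        (⊤ : Subgroup G).map f⁆ := Subgroup.map_commutator _ _ f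
    rw [this]
    apply Subgroup.commutator_mono ih
    intro x _
    obtain ⟨g, rfl⟩ := hf x
    exact ⟨g, Subgroup.mem_top g, rfl⟩

private lemma key {Q : Type*} [Group Q] (φ : Q ≃* Q) (k : ℕ)
    (h : ∀ q : Q, q⁻¹ * φ q ∈ (⊤ : Subgroup Q).lowerCentralSeries k) :
    ∀ j : ℕ, ∀ w ∈ (⊤ : Subgroup Q).lowerCentralSeries j, w⁻¹ * φ w ∈ (⊤ : Subgroup Q).lowerCentralSeries (j + k) := by
  intro j
  induction j with
  | zero => intro w _; simpa using h w
  | succ j ih =>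
    set N := (⊤ : Subgroup Q).lowerCentralSeries (j + 1 + k) with hN
    have hNn : N.Normal := inferInstance
    let K : Subgroup Q :=
      { carrier := {w | w⁻¹ * φ w ∈ N}
        one_mem' := by simpa using one_mem N
        mul_mem' := by
          intro a b ha hb
          have hid : (a * b)⁻¹ * φ (a * b)
              = (b⁻¹ * (a⁻¹ * φ a) * b⁻¹⁻¹) * (b⁻¹ * φ b) := by
            rw [map_mul]; group
          show (a * b)⁻¹ * φ (a * b) ∈ N
          rw [hid]
          exact mul_mem (hNn.conj_mem _ ha b⁻¹) hb
        inv_mem' := by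
          intro a ha
          have hid : (a⁻¹)⁻¹ * φ a⁻¹ = a * (a⁻¹ * φ a)⁻¹ * a⁻¹ := by
            rw [map_inv]; group
          show (a⁻¹)⁻¹ * φ a⁻¹ ∈ N
          rw [hid]
          exact hNn.conj_mem _ (inv_mem ha) a }
    intro w hw
    have hle : (⊤ : Subgroup Q).lowerCentralSeries (j + 1) ≤ K := by
      show ⁅(⊤ : Subgroup Q).lowerCentralSeries j, ⊤⁆ ≤ K
      rw [Subgroup.commutator_le]
      intro y hy g _
      show ⁅y, g⁆⁻¹ * φ ⁅y, g⁆ ∈ N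
      set a := y⁻¹ * φ y with hadef
      set b := g⁻¹ * φ g with hbdef
      have ha : a ∈ (⊤ : Subgroup Q).lowerCentralSeries (j + k) := ih y hy
      have hb : b ∈ (⊤ : Subgroup Q).lowerCentralSeries k := h g
      have hφy : φ y = y * a := by rw [hadef]; group
      have hφg : φ g = g * b := by rw [hbdef]; group
      rw [← QuotientGroup.eq_one_iff (N := N)]
      have hmk : ∀ u v : Q,
          ((u * v : Q) : Q ⧸ N) = (u : Q ⧸ N) * (v : Q ⧸ N) := fun _ _ => rfl
      have goal2 : ((φ ⁅y, g⁆ : Q) : Q ⧸ N) = ((⁅y, g⁆ : Q) : Q ⧸ N) := by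
        have hmc : φ ⁅y, g⁆ = ⁅φ y, φ g⁆ := map_commutatorElement (φ : Q →* Q) y g
        rw [hmc, hφy, hφg]
        have hA : ∀ x : Q ⧸ N, Commute ((a : Q) : Q ⧸ N) x := by
          intro x
          induction x using QuotientGroup.induction_on with
          | H x =>
            rw [← commutatorElement_eq_one_iff_commute]
            show ((⁅a, x⁆ : Q) : Q ⧸ N) = 1
            rw [QuotientGroup.eq_one_iff]
            have : ⁅a, x⁆ ∈ (⊤ : Subgroup Q).lowerCentralSeries (j + k + 1) :=
              Subgroup.commutator_mem_commutator ha (Subgroup.mem_top x)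
            rwa [show j + k + 1 = j + 1 + k by omega] at this
        have hB : Commute ((b : Q) : Q ⧸ N) ((y : Q) : Q ⧸ N) := by
          rw [← commutatorElement_eq_one_iff_commute]
          show ((⁅b, y⁆ : Q) : Q ⧸ N) = 1
          rw [QuotientGroup.eq_one_iff]
          have : ⁅b, y⁆ ∈ (⊤ : Subgroup Q).lowerCentralSeries (k + j + 1) :=
            lcs_comm_le Q k j (Subgroup.commutator_mem_commutator hb hy)
          rwa [show k + j + 1 = j + 1 + k by omega] at this
        calc ((⁅y * a, g * b⁆ : Q) : Q ⧸ N)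
            = ⁅((y : Q) : Q ⧸ N) * (a : Q ⧸ N), ((g : Q) : Q ⧸ N) * ((b : Q) : Q ⧸ N)⁆ := rfl
          _ = ⁅((y : Q) : Q ⧸ N), ((g : Q) : Q ⧸ N)⁆ := by
              rw [aux_c1 _ _ _ hA, aux_c2 _ _ _ hB]
          _ = ((⁅y, g⁆ : Q) : Q ⧸ N) := rfl
      calc ((⁅y, g⁆⁻¹ * φ ⁅y, g⁆ : Q) : Q ⧸ N)
          = ((⁅y, g⁆ : Q) : Q ⧸ N)⁻¹ * ((φ ⁅y, g⁆ : Q) : Q ⧸ N) := rfl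
        _ = 1 := by rw [goal2]; group
    exact hle hw

/-- If `φ` and `ψ` are automorphisms of `G/Γ_{2k+1}G` that both induce
the identity on `G/Γ_{k+1}G`, then they commute.
Here `Γ_{j+1}G = (⊤ : Subgroup G).lowerCentralSeries j`. -/
theorem stmt0 (G : Type*) [Group G] (k : ℕ) (hk : 1 ≤ k)
    (φ ψ : (G ⧸ (⊤ : Subgroup G).lowerCentralSeries (2 * k)) ≃* (G ⧸ (⊤ : Subgroup G).lowerCentralSeries (2 * k)))
    (hφ : ∀ x : G, ∃ z ∈ (⊤ : Subgroup G).lowerCentralSeries k,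
      φ (QuotientGroup.mk x) = QuotientGroup.mk (x * z))
    (hψ : ∀ x : G, ∃ z ∈ (⊤ : Subgroup G).lowerCentralSeries k,
      ψ (QuotientGroup.mk x) = QuotientGroup.mk (x * z)) :
    ∀ q : G ⧸ (⊤ : Subgroup G).lowerCentralSeries (2 * k), φ (ψ q) = ψ (φ q) := by
  set N := (⊤ : Subgroup G).lowerCentralSeries (2 * k) with hNdef
  set Q := G ⧸ N with hQdef
  have hsurj : Function.Surjective (QuotientGroup.mk' N) := QuotientGroup.mk'_surjective N
  have hbot : (⊤ : Subgroup Q).lowerCentralSeries (2 * k) = ⊥ := by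
    have h1 := lcs_le_map (QuotientGroup.mk' N) hsurj (2 * k)
    have h2 : ((⊤ : Subgroup G).lowerCentralSeries (2 * k)).map (QuotientGroup.mk' N) = ⊥ := by
      rw [Subgroup.map_eq_bot_iff, QuotientGroup.ker_mk']
    exact le_bot_iff.mp (h1.trans (le_of_eq h2))
  have hmem : ∀ (χ : Q ≃* Q), (∀ x : G, ∃ z ∈ (⊤ : Subgroup G).lowerCentralSeries k,
      χ (QuotientGroup.mk x) = QuotientGroup.mk (x * z)) →
      ∀ q : Q, q⁻¹ * χ q ∈ (⊤ : Subgroup Q).lowerCentralSeries k := by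
    intro χ hχ q
    obtain ⟨g, rfl⟩ := hsurj q
    obtain ⟨z, hz, hz2⟩ := hχ g
    have heq : ((QuotientGroup.mk' N) g)⁻¹ * χ ((QuotientGroup.mk' N) g)
        = (QuotientGroup.mk' N) z := by
      rw [QuotientGroup.mk'_apply, hz2]
      rw [show ((QuotientGroup.mk (g * z) : Q)) = (QuotientGroup.mk' N) (g * z) from rfl,
        show ((QuotientGroup.mk g : Q)) = (QuotientGroup.mk' N) g from rfl,
        map_mul]
      group
    rw [heq]
    exact Subgroup.lowerCentralSeries.map (QuotientGroup.mk' N) k ⟨z, hz, rfl⟩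
  have hφ' := hmem φ hφ
  have hψ' := hmem ψ hψ
  have hfix : ∀ (χ : Q ≃* Q), (∀ q : Q, q⁻¹ * χ q ∈ (⊤ : Subgroup Q).lowerCentralSeries k) →
      ∀ b ∈ (⊤ : Subgroup Q).lowerCentralSeries k, χ b = b := by
    intro χ hχ b hb
    have h1 := key χ k hχ k b hb
    rw [show k + k = 2 * k by ring, hbot, Subgroup.mem_bot] at h1
    have := congrArg (b * ·) h1
    simpa [mul_inv_cancel_left] using this
  intro q
  have ha : q⁻¹ * φ q ∈ (⊤ : Subgroup Q).lowerCentralSeries k := hφ' q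
  have hb : q⁻¹ * ψ q ∈ (⊤ : Subgroup Q).lowerCentralSeries k := hψ' q
  have hab : (q⁻¹ * φ q) * (q⁻¹ * ψ q) = (q⁻¹ * ψ q) * (q⁻¹ * φ q) := by
    have h1 : ⁅q⁻¹ * φ q, q⁻¹ * ψ q⁆ ∈ (⊤ : Subgroup Q).lowerCentralSeries (k + k + 1) :=
      lcs_comm_le Q k k (Subgroup.commutator_mem_commutator ha hb)
    have h2 := Subgroup.lowerCentralSeries_antitone (S := (⊤ : Subgroup Q)) (show 2 * k ≤ k + k + 1 by omega) h1
    rw [hbot, Subgroup.mem_bot] at h2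
    exact commutatorElement_eq_one_iff_mul_comm.mp h2
  have e1 : φ (ψ q) = φ q * (q⁻¹ * ψ q) := by
    conv_lhs => rw [show ψ q = q * (q⁻¹ * ψ q) by group]
    rw [map_mul, hfix φ hφ' _ hb]
  have e2 : ψ (φ q) = ψ q * (q⁻¹ * φ q) := by
    conv_lhs => rw [show φ q = q * (q⁻¹ * φ q) by group]
    rw [map_mul, hfix ψ hψ' _ ha]
  rw [e1, e2]
  calc φ q * (q⁻¹ * ψ q) = q * ((q⁻¹ * φ q) * (q⁻¹ * ψ q)) := by group
    _ = q * ((q⁻¹ * ψ q) * (q⁻¹ * φ q)) := by rw [hab]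
    _ = ψ q * (q⁻¹ * φ q) := by group
end

section
/- Let π be a group, A = Q[π] with augmentation ideal I, and k ≥ 1. For x ∈ π and u ∈ Γ_k π, one has u − x u x^{-1} ≡ [u,x] − 1 modulo I^{2k+1}, where [u,x] = uxu^{-1}x^{-1}. -/
/-- The augmentation ideal of the rational group algebra `ℚ[π]`. -/
noncomputable def augIdeal (π : Type*) [Group π] : Ideal (MonoidAlgebra ℚ π) :=
  RingHom.ker ((MonoidAlgebra.lift ℚ ℚ π) 1)

open scoped commutatorElement

lemma aug_of_sub_one {π : Type*} [Group π] (z : π) :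
    MonoidAlgebra.of ℚ π z - 1 ∈ augIdeal π := by
  simp [augIdeal, RingHom.mem_ker, map_sub, MonoidAlgebra.lift_of]

lemma aug_mul_right {π : Type*} [Group π] {z : MonoidAlgebra ℚ π}
    (hz : z ∈ augIdeal π) (a : MonoidAlgebra ℚ π) : z * a ∈ augIdeal π := by
  rw [augIdeal, RingHom.mem_ker] at *
  rw [map_mul, hz, zero_mul]

/-- The powers of the augmentation ideal absorb right multiplication. -/
lemma pow_aug_mul_right {π : Type*} [Group π] (m : ℕ) :
    ∀ z ∈ (augIdeal π) ^ (m + 1), ∀ a, z * a ∈ (augIdeal π) ^ (m + 1) := by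
  intro z hz a
  rw [Submodule.pow_succ] at hz ⊢
  refine Submodule.mul_induction_on hz (fun x hx y hy => ?_) (fun x y hx hy => ?_)
  · rw [mul_assoc]
    exact Submodule.mul_mem_mul hx (aug_mul_right hy a)
  · rw [add_mul]; exact add_mem hx hy

lemma pow_aug_mul_mem {π : Type*} [Group π] (i j : ℕ)
    {x y : MonoidAlgebra ℚ π} (hx : x ∈ (augIdeal π) ^ i)
    (hy : y ∈ (augIdeal π) ^ (j + 1)) : x * y ∈ (augIdeal π) ^ (i + j + 1) := by
  induction j generalizing y with
  | zero =>
    rw [Submodule.pow_succ]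
    rw [Submodule.pow_one] at hy
    exact Submodule.mul_mem_mul hx hy
  | succ j ih =>
    rw [Submodule.pow_succ] at hy
    rw [show i + (j + 1) + 1 = (i + j + 1) + 1 from by omega, Submodule.pow_succ]
    refine Submodule.mul_induction_on hy (fun u hu v hv => ?_) (fun u v hu hv => ?_)
    · rw [← mul_assoc]
      exact Submodule.mul_mem_mul (ih hu) hv
    · rw [mul_add]; exact add_mem hu hv

/-- The subgroup of elements `z` with `z - 1 ∈ I^m`. -/
noncomputable def dimSub (π : Type*) [Group π] (m : ℕ) : Subgroup π where
  carrier := {z | MonoidAlgebra.of ℚ π z - 1 ∈ (augIdeal π) ^ m}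
  one_mem' := by
    show MonoidAlgebra.of ℚ π 1 - 1 ∈ (augIdeal π) ^ m
    rw [map_one, sub_self]; exact zero_mem _
  mul_mem' := by
    intro a b ha hb
    replace ha : MonoidAlgebra.of ℚ π a - 1 ∈ (augIdeal π) ^ m := ha
    replace hb : MonoidAlgebra.of ℚ π b - 1 ∈ (augIdeal π) ^ m := hb
    show MonoidAlgebra.of ℚ π (a * b) - 1 ∈ (augIdeal π) ^ m
    have h : MonoidAlgebra.of ℚ π (a * b) - 1 =
        (MonoidAlgebra.of ℚ π a - 1) * MonoidAlgebra.of ℚ π b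
          + (MonoidAlgebra.of ℚ π b - 1) := by
      rw [map_mul]; noncomm_ring
    rw [h]
    match m, ha, hb with
    | 0, ha, hb =>
      rw [Submodule.pow_zero, Submodule.one_eq_span]
      have := Submodule.smul_mem
        (Submodule.span (MonoidAlgebra ℚ π) {(1 : MonoidAlgebra ℚ π)})
        ((MonoidAlgebra.of ℚ π a - 1) * MonoidAlgebra.of ℚ π b + (MonoidAlgebra.of ℚ π b - 1))
        (Submodule.mem_span_singleton_self 1)
      rwa [smul_eq_mul, mul_one] at this
    | (n + 1), ha, hb =>
      exact add_mem (pow_aug_mul_right n _ ha _) hb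
  inv_mem' := by
    intro a ha
    replace ha : MonoidAlgebra.of ℚ π a - 1 ∈ (augIdeal π) ^ m := ha
    show MonoidAlgebra.of ℚ π a⁻¹ - 1 ∈ (augIdeal π) ^ m
    have h : MonoidAlgebra.of ℚ π a⁻¹ - 1 =
        -(MonoidAlgebra.of ℚ π a⁻¹ * (MonoidAlgebra.of ℚ π a - 1)) := by
      rw [mul_sub, mul_one, ← map_mul, inv_mul_cancel, map_one, neg_sub]
    rw [h]
    refine neg_mem ?_
    have := Submodule.smul_mem ((augIdeal π) ^ m) (MonoidAlgebra.of ℚ π a⁻¹) ha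
    rwa [smul_eq_mul] at this

lemma lcs_sub_one_mem {π : Type*} [Group π] (n : ℕ) :
    (⊤ : Subgroup π).lowerCentralSeries n ≤ dimSub π (n + 1) := by
  induction n with
  | zero =>
    intro z _
    show MonoidAlgebra.of ℚ π z - 1 ∈ (augIdeal π) ^ 1
    rw [Submodule.pow_one]; exact aug_of_sub_one z
  | succ n ih =>
    rw [Subgroup.lowerCentralSeries_succ, Subgroup.commutator_def, Subgroup.closure_le]
    rintro w ⟨p, hp, q, -, rfl⟩
    have hp' : MonoidAlgebra.of ℚ π p - 1 ∈ (augIdeal π) ^ (n + 1) := ih hp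
    have hq' : MonoidAlgebra.of ℚ π q - 1 ∈ (augIdeal π) ^ 1 := by
      rw [Submodule.pow_one]; exact aug_of_sub_one q
    show MonoidAlgebra.of ℚ π (p * q * p⁻¹ * q⁻¹) - 1 ∈ (augIdeal π) ^ (n + 1 + 1)
    have key : MonoidAlgebra.of ℚ π (p * q * p⁻¹ * q⁻¹) - 1 =
        ((MonoidAlgebra.of ℚ π p - 1) * (MonoidAlgebra.of ℚ π q - 1)
          - (MonoidAlgebra.of ℚ π q - 1) * (MonoidAlgebra.of ℚ π p - 1))
          * MonoidAlgebra.of ℚ π (q * p)⁻¹ := by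
      have h1 : p * q * p⁻¹ * q⁻¹ = (p * q) * (q * p)⁻¹ := by group
      have h2 : (MonoidAlgebra.of ℚ π p - 1) * (MonoidAlgebra.of ℚ π q - 1)
          - (MonoidAlgebra.of ℚ π q - 1) * (MonoidAlgebra.of ℚ π p - 1)
          = MonoidAlgebra.of ℚ π (p * q) - MonoidAlgebra.of ℚ π (q * p) := by
        rw [map_mul, map_mul]; noncomm_ring
      rw [h1, map_mul, h2, sub_mul, ← map_mul, ← map_mul, mul_inv_cancel, map_one]
    rw [key]
    have m1 : (MonoidAlgebra.of ℚ π p - 1) * (MonoidAlgebra.of ℚ π q - 1)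
        ∈ (augIdeal π) ^ (n + 1 + 1) := by
      have := pow_aug_mul_mem (n + 1) 0 hp' hq'
      rwa [show n + 1 + 0 + 1 = n + 1 + 1 from by omega] at this
    have m2 : (MonoidAlgebra.of ℚ π q - 1) * (MonoidAlgebra.of ℚ π p - 1)
        ∈ (augIdeal π) ^ (n + 1 + 1) := by
      have := pow_aug_mul_mem 1 n hq' hp'
      rwa [show 1 + n + 1 = n + 1 + 1 from by omega] at this
    exact pow_aug_mul_right _ _ (sub_mem m1 m2) _

/-- for `x ∈ π` and `u ∈ Γ_k π` (`k ≥ 1`),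
`u − x u x⁻¹ ≡ [u,x] − 1 mod I^{2k+1}`, where `[u,x] = uxu⁻¹x⁻¹`.
Here `Γ_k π = lowerCentralSeries π (k-1)`. -/
theorem stmt5 (π : Type*) [Group π] (k : ℕ) (hk : 1 ≤ k) (x u : π)
    (hu : u ∈ (⊤ : Subgroup π).lowerCentralSeries (k - 1)) :
    (MonoidAlgebra.of ℚ π u - MonoidAlgebra.of ℚ π (x * u * x⁻¹))
      - (MonoidAlgebra.of ℚ π ⁅u, x⁆ - 1) ∈ (augIdeal π) ^ (2 * k + 1) := by
  set e := MonoidAlgebra.of ℚ π with he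
  -- `⁅u,x⁆ ∈ Γ_{k+1} π = lowerCentralSeries π k`
  have hc : ⁅u, x⁆ ∈ (⊤ : Subgroup π).lowerCentralSeries k := by
    have : ⁅u, x⁆ ∈ (⊤ : Subgroup π).lowerCentralSeries ((k - 1) + 1) := by
      rw [Subgroup.lowerCentralSeries_succ, Subgroup.commutator_def]
      exact Subgroup.subset_closure ⟨u, hu, x, trivial, rfl⟩
    rwa [show k - 1 + 1 = k from by omega] at this
  have hci : ⁅u, x⁆⁻¹ ∈ (⊤ : Subgroup π).lowerCentralSeries k := inv_mem hc
  have ha : e ⁅u, x⁆ - 1 ∈ (augIdeal π) ^ (k + 1) := lcs_sub_one_mem k hc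
  have ha' : e ⁅u, x⁆⁻¹ - 1 ∈ (augIdeal π) ^ (k + 1) := lcs_sub_one_mem k hci
  have hb : e u - 1 ∈ (augIdeal π) ^ k := by
    have := lcs_sub_one_mem (k - 1) hu
    rwa [show k - 1 + 1 = k from by omega] at this
  have h1 : e ⁅u, x⁆⁻¹ * e ⁅u, x⁆ = 1 := by
    rw [← map_mul, inv_mul_cancel, map_one]
  have h2 : e (x * u * x⁻¹) = e ⁅u, x⁆⁻¹ * e u := by
    rw [← map_mul]; congr 1; group
  have key : (e u - e (x * u * x⁻¹)) - (e ⁅u, x⁆ - 1)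
      = e ⁅u, x⁆⁻¹ * ((e ⁅u, x⁆ - 1) * (e u - 1))
        + (e ⁅u, x⁆⁻¹ - 1) * (e ⁅u, x⁆ - 1) := by
    rw [h2]
    have h3 : e ⁅u, x⁆⁻¹ * (e ⁅u, x⁆ * e u) = e u := by
      rw [← mul_assoc, h1, one_mul]
    simp only [mul_sub, sub_mul, mul_one, one_mul, h3, h1]
    noncomm_ring
  rw [key]
  have t1 : e ⁅u, x⁆⁻¹ * ((e ⁅u, x⁆ - 1) * (e u - 1))
      ∈ (augIdeal π) ^ (2 * k + 1) := by
    have hmul : (e ⁅u, x⁆ - 1) * (e u - 1) ∈ (augIdeal π) ^ (2 * k + 1) := by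
      have := pow_aug_mul_mem (k + 1) (k - 1) ha
        (by rwa [show k - 1 + 1 = k from by omega])
      rwa [show k + 1 + (k - 1) + 1 = 2 * k + 1 from by omega] at this
    have := Submodule.smul_mem ((augIdeal π) ^ (2 * k + 1)) (e ⁅u, x⁆⁻¹) hmul
    rwa [smul_eq_mul] at this
  have t2 : (e ⁅u, x⁆⁻¹ - 1) * (e ⁅u, x⁆ - 1) ∈ (augIdeal π) ^ (2 * k + 1) := by
    have h4 := pow_aug_mul_mem (k + 1) k ha' ha
    rw [show k + 1 + k + 1 = (2 * k + 1) + 1 from by omega] at h4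
    -- I^(2k+2) ⊆ I^(2k+1): use right absorption with I^(2k+1) * I
    rw [Submodule.pow_succ] at h4
    refine Submodule.mul_induction_on h4 (fun a haa b hbb => ?_) (fun a b haa hbb => add_mem haa hbb)
    rcases Nat.exists_eq_succ_of_ne_zero (n := 2 * k + 1) (by omega) with ⟨n, hn⟩
    rw [hn] at haa ⊢
    exact pow_aug_mul_right n a haa b
  exact add_mem t1 t2
end

section
/- Let G be a group, k ≥ 2, and let T be a planar binary rooted tree with m leaves (1 ≤ m ≤ k) colored by g₁, …, g_m ∈ G, and h ∈ Γ_a G for some a ≥ 1. Define Φ_j(T, g⃗, h) for each leaf index j by the inductive root-to-leaf procedure: Φ_{root edge} = h, and at each trivalent vertex with incoming value Φ and left/right subtree commutator values t_l, t_r (defined by reading each trivalent vertex as a group commutator), the value passed to the left edge is [Φ, (t_r^{-1})^{t_l}] and to the right edge is [Φ^{t_l^{-1}}, t_l^{t_r}], where x^y = yxy^{-1} and [x,y] = xyx^{-1}y^{-1}. Then Φ_j(T, g⃗, h) ∈ Γ_{a+m−1} G for every leaf j. -/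
open scoped commutatorElement

/-- A planar binary rooted tree whose leaves are colored by elements of `G`. -/
inductive GTree (G : Type*) where
  | leaf (g : G) : GTree G
  | node (l r : GTree G) : GTree G

/-- The group element obtained by reading each trivalent vertex of the tree as a
group commutator `[x,y] = xyx⁻¹y⁻¹`. -/
def GTree.val {G : Type*} [Group G] : GTree G → G
  | .leaf g => g
  | .node l r => ⁅l.val, r.val⁆

/-- The number of leaves of a tree. -/
def GTree.numLeaves {G : Type*} : GTree G → ℕ
  | .leaf _ => 1
  | .node l r => l.numLeaves + r.numLeaves

/-- Conjugation `x^y = y x y⁻¹`. -/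
def conjBy {G : Type*} [Group G] (x y : G) : G := y * x * y⁻¹

/-- The list `(Φ_j(T, g⃗, h))_j` of values at the leaves (in left-to-right order) of
the inductive root-to-leaf procedure: the root edge carries `h`, and at each
trivalent vertex with incoming value `Φ` and left/right subtree commutator values
`t_l = val l`, `t_r = val r`, the left edge receives `[Φ, (t_r⁻¹)^{t_l}]` and the
right edge receives `[Φ^{t_l⁻¹}, t_l^{t_r}]`. -/
def GTree.Phi {G : Type*} [Group G] : GTree G → G → List G
  | .leaf _, h => [h]
  | .node l r, h =>
      l.Phi ⁅h, conjBy (r.val)⁻¹ l.val⁆ ++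
        r.Phi ⁅conjBy h (l.val)⁻¹, conjBy l.val r.val⁆

open Subgroup in
lemma three_subgroups_le {G : Type*} [Group G] (N H₁ H₂ H₃ : Subgroup G) [N.Normal]
    (h1 : ⁅⁅H₂, H₃⁆, H₁⁆ ≤ N) (h2 : ⁅⁅H₃, H₁⁆, H₂⁆ ≤ N) : ⁅⁅H₁, H₂⁆, H₃⁆ ≤ N := by
  let f := QuotientGroup.mk' N
  have key : ∀ A B C : Subgroup G, ⁅⁅A, B⁆, C⁆ ≤ N ↔
      ⁅⁅A.map f, B.map f⁆, C.map f⁆ = ⊥ := by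
    intro A B C
    rw [← Subgroup.map_commutator, ← Subgroup.map_commutator,
      Subgroup.map_eq_bot_iff, QuotientGroup.ker_mk']
  rw [key]
  exact Subgroup.commutator_commutator_eq_bot_of_rotate
    ((key _ _ _).mp h1) ((key _ _ _).mp h2)

lemma lcs_commutator_le {G : Type*} [Group G] (m n : ℕ) :
    ⁅(⊤ : Subgroup G).lowerCentralSeries m, (⊤ : Subgroup G).lowerCentralSeries n⁆ ≤
      (⊤ : Subgroup G).lowerCentralSeries (m + n + 1) := by
  have hsucc : ∀ j : ℕ, (⊤ : Subgroup G).lowerCentralSeries (j + 1) =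
      ⁅(⊤ : Subgroup G).lowerCentralSeries j, (⊤ : Subgroup G)⁆ := by
    intro j
    rw [Subgroup.lowerCentralSeries_succ]
  induction n generalizing m with
  | zero =>
      have h0 : (⊤ : Subgroup G).lowerCentralSeries 0 = (⊤ : Subgroup G) := rfl
      rw [h0, ← hsucc m]
  | succ n ih =>
      rw [hsucc n, Subgroup.commutator_comm]
      apply three_subgroups_le
      · -- ⁅⁅⊤, Γm⁆, Γn⁆ ≤ Γ(m+n+2)
        rw [Subgroup.commutator_comm (⊤ : Subgroup G) ((⊤ : Subgroup G).lowerCentralSeries m),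
          ← hsucc m]
        have := ih (m + 1)
        convert this using 2
        omega
      · -- ⁅⁅Γm, Γn⁆, ⊤⁆ ≤ Γ(m+n+2)
        calc ⁅⁅(⊤ : Subgroup G).lowerCentralSeries m, (⊤ : Subgroup G).lowerCentralSeries n⁆, (⊤ : Subgroup G)⁆
            ≤ ⁅(⊤ : Subgroup G).lowerCentralSeries (m + n + 1), (⊤ : Subgroup G)⁆ :=
              Subgroup.commutator_mono (ih m) le_rfl
          _ = (⊤ : Subgroup G).lowerCentralSeries (m + n + 2) := (Subgroup.lowerCentralSeries_succ _ _).symm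

lemma GTree.one_le_numLeaves {G : Type*} (T : GTree G) : 1 ≤ T.numLeaves := by
  induction T with
  | leaf g => exact le_rfl
  | node l r ihl ihr => simp only [GTree.numLeaves]; omega

lemma GTree.val_mem {G : Type*} [Group G] (T : GTree G) :
    T.val ∈ (⊤ : Subgroup G).lowerCentralSeries (T.numLeaves - 1) := by
  induction T with
  | leaf g => exact Subgroup.mem_top g
  | node l r ihl ihr =>
      have := Subgroup.commutator_mem_commutator ihl ihr
      have h2 := lcs_commutator_le (G := G) (l.numLeaves - 1) (r.numLeaves - 1) this
      have hl := l.one_le_numLeaves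
      have hr := r.one_le_numLeaves
      have : l.numLeaves - 1 + (r.numLeaves - 1) + 1 =
          GTree.numLeaves (GTree.node l r) - 1 := by
        simp only [GTree.numLeaves]; omega
      rwa [this] at h2

/-- if `T` is a planar binary rooted tree with `m` leaves
(`1 ≤ m ≤ k`) colored by elements of `G` and `h ∈ Γ_a G` (`a ≥ 1`), then
`Φ_j(T, g⃗, h) ∈ Γ_{a+m−1} G` for every leaf `j`.
Here `Γ_j G = (⊤ : Subgroup G).lowerCentralSeries (j-1)`. -/
theorem stmt19 (G : Type*) [Group G] (k : ℕ) (hk : 2 ≤ k)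
    (T : GTree G) (hT : T.numLeaves ≤ k)
    (a : ℕ) (ha : 1 ≤ a) (h : G) (hh : h ∈ (⊤ : Subgroup G).lowerCentralSeries (a - 1)) :
    ∀ φ ∈ T.Phi h, φ ∈ (⊤ : Subgroup G).lowerCentralSeries (a + T.numLeaves - 2) := by
  clear hT hk
  induction T generalizing a h with
  | leaf g =>
      intro φ hφ
      simp only [GTree.Phi, List.mem_singleton] at hφ
      subst hφ
      have : a + GTree.numLeaves (GTree.leaf g) - 2 = a - 1 := by
        simp only [GTree.numLeaves]; omega
      rwa [this]
  | node l r ihl ihr =>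
      intro φ hφ
      have hnl := l.one_le_numLeaves
      have hnr := r.one_le_numLeaves
      simp only [GTree.Phi, List.mem_append] at hφ
      rcases hφ with hφ | hφ
      · -- left: incoming value ⁅h, conjBy r.val⁻¹ l.val⁆ ∈ Γ((a + r.numLeaves) - 1)
        have hc : conjBy (r.val)⁻¹ l.val ∈ (⊤ : Subgroup G).lowerCentralSeries (r.numLeaves - 1) :=
          (Subgroup.lowerCentralSeries_normal ⊤ (r.numLeaves - 1)).conj_mem _ (inv_mem r.val_mem) _
        have hmem : ⁅h, conjBy (r.val)⁻¹ l.val⁆ ∈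
            (⊤ : Subgroup G).lowerCentralSeries (a + r.numLeaves - 1) := by
          have := lcs_commutator_le (G := G) (a - 1) (r.numLeaves - 1)
            (Subgroup.commutator_mem_commutator hh hc)
          have he : a - 1 + (r.numLeaves - 1) + 1 = a + r.numLeaves - 1 := by omega
          rwa [he] at this
        have := ihl (a + r.numLeaves) (by omega) _ hmem φ hφ
        have he : a + r.numLeaves + l.numLeaves - 2 =
            a + GTree.numLeaves (GTree.node l r) - 2 := by
          simp only [GTree.numLeaves]; omega
        rwa [he] at this
      · -- right: incoming value ⁅conjBy h l.val⁻¹, conjBy l.val r.val⁆ ∈ Γ((a + l.numLeaves) - 1)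
        have hc1 : conjBy h (l.val)⁻¹ ∈ (⊤ : Subgroup G).lowerCentralSeries (a - 1) :=
          (Subgroup.lowerCentralSeries_normal ⊤ (a - 1)).conj_mem _ hh _
        have hc2 : conjBy l.val r.val ∈ (⊤ : Subgroup G).lowerCentralSeries (l.numLeaves - 1) :=
          (Subgroup.lowerCentralSeries_normal ⊤ (l.numLeaves - 1)).conj_mem _ l.val_mem _
        have hmem : ⁅conjBy h (l.val)⁻¹, conjBy l.val r.val⁆ ∈
            (⊤ : Subgroup G).lowerCentralSeries (a + l.numLeaves - 1) := by
          have := lcs_commutator_le (G := G) (a - 1) (l.numLeaves - 1)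
            (Subgroup.commutator_mem_commutator hc1 hc2)
          have he : a - 1 + (l.numLeaves - 1) + 1 = a + l.numLeaves - 1 := by omega
          rwa [he] at this
        have := ihr (a + l.numLeaves) (by omega) _ hmem φ hφ
        have he : a + l.numLeaves + r.numLeaves - 2 =
            a + GTree.numLeaves (GTree.node l r) - 2 := by
          simp only [GTree.numLeaves]; omega
        rwa [he] at this
end
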